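/- Let δ > 0 and define the uniform quantizer q_δ : ℝ → δ(2ℤ − 1) by q_δ(v) := (2⌈v/(2δ)⌉ − 1)δ, where ⌈·⌉ denotes the ceiling function. Let τ be a random variable uniformly distributed on [−δ, δ]. Then for every s ∈ ℝ: E[q_δ(s + τ)] = s. -/

import Mathlib

open MeasureTheory ProbabilityTheory

/-- The uniform probability measure on the interval `[a, b]`. -/
noncomputable def unifMeasure (a b : ℝ) : Measure ℝ :=
  (ENNReal.ofReal (b - a))⁻¹ • volume.restrict (Set.Icc a b)

/-- The uniform quantizer `q_δ(v) := (2⌈v/(2δ)⌉ − 1)δ` with resolution `δ > 0`. -/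
noncomputable def uniformQuantizer (δ v : ℝ) : ℝ := (2 * (⌈v / (2 * δ)⌉ : ℤ) - 1) * δ

/-- If `τ` is uniformly distributed on `[−δ, δ]` (`δ > 0`), then for every
`s ∈ ℝ`: `E[q_δ(s + τ)] = s`, i.e. the uniformly dithered quantizer is unbiased. -/
theorem stmt_18 {Ω : Type*} [MeasurableSpace Ω] (P : Measure Ω) [IsProbabilityMeasure P]
    (δ : ℝ) (hδ : 0 < δ) (τ : Ω → ℝ) (hτm : Measurable τ)
    (hτ : Measure.map τ P = unifMeasure (-δ) δ) (s : ℝ) :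
    ∫ ω, uniformQuantizer δ (s + τ ω) ∂P = s := by
  have hδ2 : (0:ℝ) < 2 * δ := by linarith
  set m : ℤ := ⌈(s + δ) / (2 * δ)⌉ with hm
  set t0 : ℝ := 2 * δ * ((m : ℝ) - 1) - s with ht0
  have hmle : (s + δ) / (2 * δ) ≤ (m : ℝ) := Int.le_ceil _
  have hmgt : (m : ℝ) < (s + δ) / (2 * δ) + 1 := Int.ceil_lt_add_one _
  have hle : s + δ ≤ 2 * δ * m := by
    rw [div_le_iff₀ hδ2] at hmle; linarith
  have hgt : 2 * δ * ((m : ℝ) - 1) < s + δ := by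
    have := (lt_div_iff₀ hδ2).mp (by linarith : (m : ℝ) - 1 < (s + δ) / (2 * δ))
    linarith
  have ht0a : -δ ≤ t0 := by rw [ht0]; push_cast; nlinarith
  have ht0b : t0 ≤ δ := by rw [ht0]; push_cast; nlinarith
  -- pointwise values
  have h1 : Set.EqOn (fun t => uniformQuantizer δ (s + t))
      (fun _ => (2 * ((m : ℝ) - 1) - 1) * δ) (Set.Ioc (-δ) t0) := by
    intro t ht
    obtain ⟨ht1, ht2⟩ := ht
    have hceil : ⌈(s + t) / (2 * δ)⌉ = m - 1 := by
      rw [Int.ceil_eq_iff]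
      constructor
      · push_cast
        rw [lt_div_iff₀ hδ2]
        nlinarith
      · push_cast
        rw [div_le_iff₀ hδ2]
        rw [ht0] at ht2
        nlinarith
    simp only [uniformQuantizer, hceil]
    push_cast
    ring
  have h2 : Set.EqOn (fun t => uniformQuantizer δ (s + t))
      (fun _ => (2 * (m : ℝ) - 1) * δ) (Set.Ioc t0 δ) := by
    intro t ht
    obtain ⟨ht1, ht2⟩ := ht
    have hceil : ⌈(s + t) / (2 * δ)⌉ = m := by
      rw [Int.ceil_eq_iff]
      constructor
      · push_cast
        rw [lt_div_iff₀ hδ2]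
        rw [ht0] at ht1
        nlinarith
      · rw [div_le_iff₀ hδ2]
        nlinarith
    simp only [uniformQuantizer, hceil]
  -- measurability of the integrand
  have hfm : Measurable fun t : ℝ => uniformQuantizer δ (s + t) := by
    unfold uniformQuantizer
    apply Measurable.mul _ measurable_const
    apply Measurable.sub _ measurable_const
    apply Measurable.mul measurable_const
    have hc : Measurable fun t : ℝ => (⌈(s + t) / (2 * δ)⌉ : ℤ) :=
      Measurable.ceil ((measurable_const.add measurable_id).div_const _)
    exact (measurable_from_top (f := fun n : ℤ => (n : ℝ))).comp hc
  -- transport the integral to ℝ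
  rw [← integral_map hτm.aemeasurable hfm.aestronglyMeasurable, hτ]
  unfold unifMeasure
  rw [integral_smul_measure]
  have hvol : (ENNReal.ofReal (δ - -δ))⁻¹.toReal = (2 * δ)⁻¹ := by
    rw [ENNReal.toReal_inv, ENNReal.toReal_ofReal (by linarith)]
    norm_num; ring_nf
  rw [hvol]
  have hIcc : ∫ t in Set.Icc (-δ) δ, uniformQuantizer δ (s + t)
      = ∫ t in Set.Ioc (-δ) δ, uniformQuantizer δ (s + t) :=
    integral_Icc_eq_integral_Ioc
  rw [hIcc]
  have hunion : Set.Ioc (-δ) t0 ∪ Set.Ioc t0 δ = Set.Ioc (-δ) δ :=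
    Set.Ioc_union_Ioc_eq_Ioc ht0a ht0b
  rw [← hunion]
  have hint1 : IntegrableOn (fun t => uniformQuantizer δ (s + t)) (Set.Ioc (-δ) t0) := by
    apply IntegrableOn.congr_fun _ h1.symm measurableSet_Ioc
    exact integrableOn_const measure_Ioc_lt_top.ne
  have hint2 : IntegrableOn (fun t => uniformQuantizer δ (s + t)) (Set.Ioc t0 δ) := by
    apply IntegrableOn.congr_fun _ h2.symm measurableSet_Ioc
    exact integrableOn_const measure_Ioc_lt_top.ne
  rw [setIntegral_union (Set.Ioc_disjoint_Ioc_of_le le_rfl) measurableSet_Ioc hint1 hint2]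
  rw [setIntegral_congr_fun measurableSet_Ioc h1, setIntegral_congr_fun measurableSet_Ioc h2]
  rw [setIntegral_const, setIntegral_const]
  rw [Real.volume_real_Ioc_of_le ht0a, Real.volume_real_Ioc_of_le ht0b]
  simp only [smul_eq_mul]
  rw [ht0]
  field_simp
  ring
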